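/- Let μ be a probability measure on ℝ^p and let f : ℝ^p → ℝ be additively separable, f(x) = Σ_{k=1}^p h_k(x_k), with each map y ↦ h_k(y_k) μ-integrable. Define the partial dependence function of feature j by f_j^{PD}(t) = ∫ f(y with j-th coordinate replaced by t) dμ(y), and its mean-centered version f_j^{PD,c}(t) = f_j^{PD}(t) − ∫ f_j^{PD}(y_j) dμ(y). Then for every x ∈ ℝ^p, f(x) = ∫ f dμ + Σ_{j=1}^p f_j^{PD,c}(x_j); i.e., an additively separable prediction function is exactly recovered by the constant E_μ[f(X)] plus the sum of its mean-centered one-dimensional partial dependence functions. -/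

import Mathlib

open MeasureTheory Finset

/-- An additively separable prediction function `f x = ∑ k, h k (x k)` is exactly recovered
by the constant `E_μ[f]` plus the sum over features `j` of the mean-centered one-dimensional
partial dependence functions evaluated at `x j`. -/
theorem stmt_5 {p : ℕ} (μ : Measure (Fin p → ℝ)) [IsProbabilityMeasure μ]
    (f : (Fin p → ℝ) → ℝ) (h : Fin p → ℝ → ℝ)
    (hf : ∀ x, f x = ∑ k, h k (x k))
    (hint : ∀ k, Integrable (fun y => h k (y k)) μ)
    (x : Fin p → ℝ) :
    f x = (∫ y, f y ∂μ) +
      ∑ j, ((∫ y, f (Function.update y j (x j)) ∂μ) -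
        ∫ y, (∫ z, f (Function.update z j (y j)) ∂μ) ∂μ) := by
  set I : Fin p → ℝ := fun k => ∫ y, h k (y k) ∂μ with hI
  have key : ∀ (j : Fin p) (t : ℝ),
      (∫ y, f (Function.update y j t) ∂μ) = ∑ k, (if k = j then h k t else I k) := by
    intro j t
    have h1 : ∀ y : Fin p → ℝ, f (Function.update y j t)
        = ∑ k, (if k = j then h k t else h k (y k)) := by
      intro y
      rw [hf]
      refine Finset.sum_congr rfl fun k _ => ?_
      by_cases hk : k = j
      · subst hk; simp
      · simp [Function.update_apply, hk]
    rw [integral_congr_ae (Filter.Eventually.of_forall h1),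
        integral_finset_sum]
    · refine Finset.sum_congr rfl fun k _ => ?_
      by_cases hk : k = j
      · simp [hk]
      · simp [hk, hI]
    · intro k _
      by_cases hk : k = j
      · simp only [hk, if_true]; exact integrable_const _
      · simp only [hk, if_false]; exact hint k
  have hIf : (∫ y, f y ∂μ) = ∑ k, I k := by
    rw [integral_congr_ae (Filter.Eventually.of_forall fun y => hf y),
        integral_finset_sum _ (fun k _ => hint k)]
  have hinner : ∀ j : Fin p,
      (∫ y, (∫ z, f (Function.update z j (y j)) ∂μ) ∂μ) = ∑ k, I k := by
    intro j
    have h2 : ∀ y : Fin p → ℝ, (∫ z, f (Function.update z j (y j)) ∂μ)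
        = ∑ k, (if k = j then h k (y j) else I k) := fun y => key j (y j)
    rw [integral_congr_ae (Filter.Eventually.of_forall h2), integral_finset_sum]
    · refine Finset.sum_congr rfl fun k _ => ?_
      by_cases hk : k = j
      · subst hk; simp [hI]
      · simp [hk]
    · intro k _
      by_cases hk : k = j
      · subst hk; simp only [if_true]; exact hint k
      · simp only [hk, if_false]; exact integrable_const _
  have hsum : ∀ j : Fin p,
      (∑ k, (if k = j then h k (x j) else I k)) = h j (x j) - I j + ∑ k, I k := by
    intro j
    have h3 : ∀ k : Fin p, (if k = j then h k (x j) else I k)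
        = (if k = j then h k (x j) - I k else 0) + I k := by
      intro k; split <;> ring
    simp_rw [h3]
    rw [Finset.sum_add_distrib, Finset.sum_ite_eq' univ j]
    simp
  have hterm : ∀ j : Fin p,
      ((∫ y, f (Function.update y j (x j)) ∂μ) -
        ∫ y, (∫ z, f (Function.update z j (y j)) ∂μ) ∂μ) = h j (x j) - I j := by
    intro j
    rw [key j (x j), hinner j, hsum j]; ring
  rw [Finset.sum_congr rfl fun j _ => hterm j, hIf, hf x, Finset.sum_sub_distrib]
  ring
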